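/- Let α ∈ {2,3,4} be a theta index and {β,γ} = {2,3,4}∖{α}, and let z, q ∈ ℂ be such that every theta function appearing in a denominator below is nonzero. With φ(x,u) = θ₁′(0)·θ₁(x+u)/(θ₁(x)·θ₁(u)), one has θ_α(z−2q)·φ(2q,z) − θ_α(z+2q)·φ(−2q,z) = 2·θ₁′(0)·θ_α(z)·θ_β(2q)·θ_γ(2q) / ( θ_β(0)·θ_γ(0)·θ₁(2q) ). -/

import Mathlib

noncomputable section

open Complex Matrix
open scoped Matrix Kronecker

namespace RvD

/-- First Jacobi theta function of modulus `τ`. -/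
def th1 (τ u : ℂ) : ℂ :=
  -I * ∑' k : ℤ, (-1 : ℂ) ^ k *
    Complex.exp ((Real.pi : ℂ) * I * τ * ((k : ℂ) + 1/2)^2 + (Real.pi : ℂ) * I * (2*(k : ℂ) + 1) * u)

def th2 (τ u : ℂ) : ℂ := th1 τ (u + 1/2)

def th3 (τ u : ℂ) : ℂ :=
  Complex.exp ((Real.pi : ℂ) * I * τ / 4 + (Real.pi : ℂ) * I * u) * th1 τ (u + (1 + τ)/2)

def th4 (τ u : ℂ) : ℂ :=
  -I * Complex.exp ((Real.pi : ℂ) * I * τ / 4 + (Real.pi : ℂ) * I * u) * th1 τ (u + τ/2)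

/-- `th τ a = θ_{a+1}` for `a = 0,1,2,3`. -/
def th (τ : ℂ) : Fin 4 → ℂ → ℂ
  | 0 => th1 τ
  | 1 => th2 τ
  | 2 => th3 τ
  | 3 => th4 τ

/-- Half-periods `ω₀=0, ω₁=1/2, ω₂=(1+τ)/2, ω₃=τ/2`. -/
def om (τ : ℂ) : Fin 4 → ℂ
  | 0 => 0
  | 1 => 1/2
  | 2 => (1 + τ)/2
  | 3 => τ/2

/-- Derivative `θ₁′`. -/
def th1d (τ : ℂ) : ℂ → ℂ := deriv (th1 τ)

/-- `E₁(z) = θ₁′(z)/θ₁(z)`. -/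
def E1 (τ z : ℂ) : ℂ := th1d τ z / th1 τ z

/-- Weierstrass `℘(z) = −E₁′(z) + θ₁′′′(0)/(3θ₁′(0))`. -/
def wp (τ z : ℂ) : ℂ := -deriv (E1 τ) z + iteratedDeriv 3 (th1 τ) 0 / (3 * th1d τ 0)

/-- `ψ_a(z,y) = θ₁′(0)·θ_{a+1}(z+y)/(θ₁(z)·θ_{a+1}(y))`. -/
def psi (τ : ℂ) (a : Fin 4) (z y : ℂ) : ℂ := th1d τ 0 * th τ a (z + y) / (th1 τ z * th τ a y)

/-- `φ_α(z) = ψ_α(z,0)` (used for α = 1,2,3). -/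
def ph (τ : ℂ) (a : Fin 4) (z : ℂ) : ℂ := psi τ a z 0

/-- `v(z,u|ν) = ∑_{a=0}^{3} ν_a ψ_a(2z,u)`. -/
def vf (τ : ℂ) (ν : Fin 4 → ℂ) (z u : ℂ) : ℂ := ∑ a : Fin 4, ν a * psi τ a (2*z) u

/-- Dual parameters `ν̆`. -/
def dual (ν : Fin 4 → ℂ) : Fin 4 → ℂ
  | 0 => (ν 0 + ν 1 + ν 2 + ν 3)/2
  | 1 => (ν 0 + ν 1 - ν 2 - ν 3)/2
  | 2 => (ν 0 - ν 1 + ν 2 - ν 3)/2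
  | 3 => (ν 0 - ν 1 - ν 2 + ν 3)/2

/-- Pauli matrices (`pauli 0 = σ₀` is the identity). -/
def pauli : Fin 4 → Matrix (Fin 2) (Fin 2) ℂ
  | 0 => 1
  | 1 => !![0, 1; 1, 0]
  | 2 => !![0, -I; I, 0]
  | 3 => !![1, 0; 0, -1]

/-- Classical elliptic r-matrix `r(x) = (1/2)∑_{α=1}^{3} φ_α(x) σ_{4−α}⊗σ_{4−α}`. -/
def rmat (τ x : ℂ) : Matrix (Fin 2 × Fin 2) (Fin 2 × Fin 2) ℂ :=
  (1/2 : ℂ) • (ph τ 1 x • (pauli 3 ⊗ₖ pauli 3) + ph τ 2 x • (pauli 2 ⊗ₖ pauli 2)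
    + ph τ 3 x • (pauli 1 ⊗ₖ pauli 1))

/-- Canonical Poisson bracket `{f,g} = ∂_p f ∂_q g − ∂_q f ∂_p g`. -/
def pb (f g : ℂ → ℂ → ℂ) (p q : ℂ) : ℂ :=
  deriv (fun p' => f p' q) p * deriv (fun q' => g p q') q
  - deriv (fun q' => f p q') q * deriv (fun p' => g p' q) p

end RvD

namespace RvD

/-- auxiliary theta-like series -/
def J (τ c u : ℂ) : ℂ :=
  ∑' k : ℤ, Complex.exp ((Real.pi : ℂ) * I * τ * ((k : ℂ) + c)^2
    + 2 * (Real.pi : ℂ) * I * ((k : ℂ) + c) * u)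

lemma J_term_eq (τ c u : ℂ) (k : ℤ) :
    Complex.exp ((Real.pi : ℂ) * I * τ * ((k : ℂ) + c)^2
      + 2 * (Real.pi : ℂ) * I * ((k : ℂ) + c) * u)
    = Complex.exp ((Real.pi : ℂ) * I * τ * c^2 + 2 * (Real.pi : ℂ) * I * c * u)
      * jacobiTheta₂_term k (c * τ + u) τ := by
  rw [jacobiTheta₂_term, ← Complex.exp_add]
  congr 1
  ring

lemma summable_norm_J (τ : ℂ) (hτ : 0 < τ.im) (c u : ℂ) :
    Summable fun k : ℤ => ‖Complex.exp ((Real.pi : ℂ) * I * τ * ((k : ℂ) + c)^2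
      + 2 * (Real.pi : ℂ) * I * ((k : ℂ) + c) * u)‖ := by
  have h : Summable fun k : ℤ => jacobiTheta₂_term k (c * τ + u) τ :=
    (summable_jacobiTheta₂_term_iff (c * τ + u) τ).mpr hτ
  rw [← summable_norm_iff] at h
  refine (h.mul_left ‖Complex.exp ((Real.pi : ℂ) * I * τ * c^2
      + 2 * (Real.pi : ℂ) * I * c * u)‖).congr fun k => ?_
  rw [J_term_eq τ c u k, norm_mul]

lemma summable_J (τ : ℂ) (hτ : 0 < τ.im) (c u : ℂ) :
    Summable fun k : ℤ => Complex.exp ((Real.pi : ℂ) * I * τ * ((k : ℂ) + c)^2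
      + 2 * (Real.pi : ℂ) * I * ((k : ℂ) + c) * u) :=
  (summable_norm_J τ hτ c u).of_norm

lemma J_shift1 (τ c u : ℂ) : J τ c (u + 1) = Complex.exp (2 * (Real.pi : ℂ) * I * c) * J τ c u := by
  rw [J, J, ← tsum_mul_left]
  refine tsum_congr fun k => ?_
  rw [← Complex.exp_add]
  have : (Real.pi : ℂ) * I * τ * ((k : ℂ) + c)^2 + 2 * (Real.pi : ℂ) * I * ((k : ℂ) + c) * (u + 1)
      = (2 * (Real.pi : ℂ) * I * c + ((Real.pi : ℂ) * I * τ * ((k : ℂ) + c)^2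
        + 2 * (Real.pi : ℂ) * I * ((k : ℂ) + c) * u)) + (k : ℂ) * (2 * (Real.pi : ℂ) * I) := by
    ring
  rw [this, Complex.exp_add, Complex.exp_int_mul_two_pi_mul_I, mul_one]

lemma J_offset1 (τ c u : ℂ) : J τ (c + 1) u = J τ c u := by
  rw [J, J]
  rw [← (Equiv.addRight (1 : ℤ)).tsum_eq (fun k : ℤ => Complex.exp ((Real.pi : ℂ) * I * τ * ((k : ℂ) + c)^2
      + 2 * (Real.pi : ℂ) * I * ((k : ℂ) + c) * u))]
  refine tsum_congr fun k => ?_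
  simp only [Equiv.coe_addRight]
  congr 2 <;> push_cast <;> ring

lemma J_neg (τ c u : ℂ) : J τ c (-u) = J τ (-c) u := by
  rw [J, J]
  rw [← (Equiv.neg ℤ).tsum_eq (fun k : ℤ => Complex.exp ((Real.pi : ℂ) * I * τ * ((k : ℂ) + (-c))^2
      + 2 * (Real.pi : ℂ) * I * ((k : ℂ) + (-c)) * u))]
  refine tsum_congr fun k => ?_
  simp only [Equiv.neg_apply]
  congr 1
  push_cast
  ring

lemma J_tau_half (τ c u : ℂ) :
    J τ c (u + τ/2) = Complex.exp (-((Real.pi : ℂ) * I * τ)/4 - (Real.pi : ℂ) * I * u)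
      * J τ (c + 1/2) u := by
  rw [J, J, ← tsum_mul_left]
  refine tsum_congr fun k => ?_
  rw [← Complex.exp_add]
  congr 1
  ring

lemma summable_alt {g : ℤ → ℂ} (hg : Summable fun d : ℤ => ‖g d‖) :
    Summable fun d : ℤ => (-1 : ℂ)^d * g d := by
  apply Summable.of_norm
  refine hg.congr fun d => ?_
  rw [norm_mul, norm_zpow, norm_neg, norm_one, _root_.one_zpow, one_mul]

/-- 1-D parity lemma -/
lemma par1 {g : ℤ → ℂ} (hg : Summable fun d : ℤ => ‖g d‖) (p : ℤ) :
    ∑' n : ℤ, g (p - 2*n)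
      = (1/2) * ((∑' d : ℤ, g d) + (-1 : ℂ)^p * ∑' d : ℤ, (-1 : ℂ)^d * g d) := by
  have hg0 : Summable g := hg.of_norm
  have hga : Summable fun d : ℤ => (-1 : ℂ)^d * g d := summable_alt hg
  rcases Int.even_or_odd p with ⟨q, hq⟩ | ⟨q, hq⟩
  · -- p = q + q
    have h1 : ∑' n : ℤ, g (p - 2*n) = ∑' n : ℤ, g (2*n) := by
      rw [← (Equiv.subLeft q).tsum_eq (fun n : ℤ => g (p - 2*n))]
      refine tsum_congr fun n => ?_
      simp only [Equiv.subLeft_apply]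
      congr 1; omega
    have hinj : Function.Injective (fun n : ℤ => 2*n) := by intro a b h; dsimp only at h; omega
    have hsupp : Function.support (fun d : ℤ => g d + (-1:ℂ)^d * g d)
        ⊆ Set.range (fun n : ℤ => 2*n) := by
      intro d hd
      rcases Int.even_or_odd d with ⟨r, hr⟩ | ⟨r, hr⟩
      · exact ⟨r, by dsimp only; omega⟩
      · exfalso; apply hd
        have : Odd d := ⟨r, hr⟩
        simp [this.neg_one_zpow]
    have key := Function.Injective.tsum_eq hinj hsupp
    have h2 : ∑' n : ℤ, (g (2*n) + (-1:ℂ)^(2*n) * g (2*n))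
        = (∑' d : ℤ, g d) + ∑' d : ℤ, (-1:ℂ)^d * g d := by
      rw [key, Summable.tsum_add hg0 hga]
    have h3 : ∀ n : ℤ, g (2*n) + (-1:ℂ)^(2*n) * g (2*n) = 2 * g (2*n) := by
      intro n
      have : Even (2*n) := ⟨n, by ring⟩
      rw [this.neg_one_zpow]; ring
    rw [tsum_congr h3, tsum_mul_left] at h2
    have hp : Even p := ⟨q, hq⟩
    rw [h1, hp.neg_one_zpow]
    linear_combination h2 / 2
  · -- p = 2*q + 1
    have h1 : ∑' n : ℤ, g (p - 2*n) = ∑' n : ℤ, g (2*n + 1) := by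
      rw [← (Equiv.subLeft q).tsum_eq (fun n : ℤ => g (p - 2*n))]
      refine tsum_congr fun n => ?_
      simp only [Equiv.subLeft_apply]
      congr 1; omega
    have hinj : Function.Injective (fun n : ℤ => 2*n + 1) := by intro a b h; dsimp only at h; omega
    have hsupp : Function.support (fun d : ℤ => g d - (-1:ℂ)^d * g d)
        ⊆ Set.range (fun n : ℤ => 2*n + 1) := by
      intro d hd
      rcases Int.even_or_odd d with ⟨r, hr⟩ | ⟨r, hr⟩
      · exfalso; apply hd
        have : Even d := ⟨r, hr⟩
        simp [this.neg_one_zpow]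
      · exact ⟨r, by dsimp only; omega⟩
    have key := Function.Injective.tsum_eq hinj hsupp
    have h2 : ∑' n : ℤ, (g (2*n+1) - (-1:ℂ)^(2*n+1) * g (2*n+1))
        = (∑' d : ℤ, g d) - ∑' d : ℤ, (-1:ℂ)^d * g d := by
      rw [key, Summable.tsum_sub hg0 hga]
    have h3 : ∀ n : ℤ, g (2*n+1) - (-1:ℂ)^(2*n+1) * g (2*n+1) = 2 * g (2*n+1) := by
      intro n
      have : Odd (2*n+1) := ⟨n, by ring⟩
      rw [this.neg_one_zpow]; ring
    rw [tsum_congr h3, tsum_mul_left] at h2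
    have hp : Odd p := ⟨q, hq⟩
    rw [h1, hp.neg_one_zpow]
    linear_combination h2 / 2

def shear : ℤ × ℤ ≃ ℤ × ℤ where
  toFun x := (x.1 - x.2, x.2)
  invFun x := (x.1 + x.2, x.2)
  left_inv x := by simp
  right_inv x := by simp

lemma sum_split {F G : ℤ → ℂ} (hF : Summable fun k : ℤ => ‖F k‖)
    (hG : Summable fun k : ℤ => ‖G k‖) :
    ∑' mn : ℤ × ℤ, F (mn.1 + mn.2) * G (mn.1 - mn.2)
      = (1/2) * ((∑' k : ℤ, F k) * (∑' k : ℤ, G k)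
          + (∑' k : ℤ, (-1:ℂ)^k * F k) * (∑' k : ℤ, (-1:ℂ)^k * G k)) := by
  have hF0 : Summable F := hF.of_norm
  have hG0 : Summable G := hG.of_norm
  have hFa := summable_alt hF
  have h0 : ∑' mn : ℤ × ℤ, F (mn.1 + mn.2) * G (mn.1 - mn.2)
      = ∑' pn : ℤ × ℤ, F pn.1 * G (pn.1 - 2*pn.2) := by
    rw [← shear.tsum_eq (fun mn : ℤ × ℤ => F (mn.1 + mn.2) * G (mn.1 - mn.2))]
    refine tsum_congr fun pn => ?_
    simp only [shear, Equiv.coe_fn_mk]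
    congr 2 <;> ring
  have hprod : Summable fun pn : ℤ × ℤ => F pn.1 * G (pn.1 - 2*pn.2) := by
    apply Summable.of_norm
    have hnn : 0 ≤ fun pn : ℤ × ℤ => ‖F pn.1 * G (pn.1 - 2*pn.2)‖ := fun pn => norm_nonneg _
    rw [summable_prod_of_nonneg hnn]
    constructor
    · intro p
      have : Summable fun n : ℤ => ‖G (p - 2*n)‖ :=
        hG.comp_injective (by intro a b h; dsimp only at h; omega : Function.Injective fun n : ℤ => p - 2*n)
      exact (this.mul_left ‖F p‖).congr fun n => (norm_mul _ _).symm
    · have hb : ∀ p : ℤ, ∑' n : ℤ, ‖F p * G (p - 2*n)‖ ≤ ‖F p‖ * ∑' d : ℤ, ‖G d‖ := by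
        intro p
        have hsum : Summable fun n : ℤ => ‖G (p - 2*n)‖ :=
          hG.comp_injective (by intro a b h; dsimp only at h; omega : Function.Injective fun n : ℤ => p - 2*n)
        calc ∑' n : ℤ, ‖F p * G (p - 2*n)‖ = ∑' n : ℤ, ‖F p‖ * ‖G (p - 2*n)‖ := by
              exact tsum_congr fun n => norm_mul _ _
          _ = ‖F p‖ * ∑' n : ℤ, ‖G (p - 2*n)‖ := tsum_mul_left
          _ ≤ ‖F p‖ * ∑' d : ℤ, ‖G d‖ := by
              apply mul_le_mul_of_nonneg_left _ (norm_nonneg _)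
              exact hsum.tsum_le_tsum_of_inj (fun n : ℤ => p - 2*n)
                (by intro a b h; dsimp only at h; omega) (fun c _ => norm_nonneg _)
                (fun n => le_rfl) hG
      apply Summable.of_nonneg_of_le (fun p => tsum_nonneg fun n => norm_nonneg _) hb
      exact hF.mul_right _
  rw [h0, Summable.tsum_prod' hprod (fun p => (hG0.comp_injective
      (by intro a b h; dsimp only at h; omega : Function.Injective fun n : ℤ => p - 2*n)).mul_left (F p))]
  have h1 : ∀ p : ℤ, ∑' n : ℤ, F p * G (p - 2*n)
      = ((∑' d : ℤ, G d)/2) * F p + ((∑' d : ℤ, (-1:ℂ)^d * G d)/2) * ((-1:ℂ)^p * F p) := by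
    intro p
    rw [tsum_mul_left, par1 hG p]
    ring
  rw [tsum_congr h1, Summable.tsum_add (hF0.mul_left _) (hFa.mul_left _), tsum_mul_left, tsum_mul_left]
  ring

lemma half_im (τ : ℂ) (hτ : 0 < τ.im) : 0 < (τ/2).im := by
  rw [show τ/2 = ((1/2 : ℝ) : ℂ) * τ by push_cast; ring, Complex.im_ofReal_mul]
  linarith

/-- alternating sum of J-terms -/
lemma alt_J (τ : ℂ) (c v : ℂ) :
    ∑' k : ℤ, (-1:ℂ)^k * Complex.exp ((Real.pi : ℂ) * I * τ * ((k : ℂ) + c)^2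
      + 2 * (Real.pi : ℂ) * I * ((k : ℂ) + c) * v)
    = Complex.exp (-(Real.pi : ℂ) * I * c) * J τ c (v + 1/2) := by
  rw [J, ← tsum_mul_left]
  refine tsum_congr fun k => ?_
  rw [← Complex.exp_add, show ((-1:ℂ)^k) = Complex.exp ((k : ℂ) * ((Real.pi : ℂ) * I)) by
    rw [Complex.exp_int_mul, Complex.exp_pi_mul_I], ← Complex.exp_add]
  congr 1
  ring

/-- Fundamental product/factorization lemma -/
lemma FL (τ : ℂ) (hτ : 0 < τ.im) (c c' x y : ℂ) :
    J τ c x * J τ c' y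
      = (1/2) * (J (τ/2) (c+c') ((x+y)/2) * J (τ/2) (c-c') ((x-y)/2)
        + Complex.exp (-2 * (Real.pi : ℂ) * I * c)
          * (J (τ/2) (c+c') ((x+y+1)/2) * J (τ/2) (c-c') ((x-y+1)/2))) := by
  have h2 := half_im τ hτ
  set FF : ℤ → ℂ := fun p => Complex.exp ((Real.pi : ℂ) * I * (τ/2) * ((p : ℂ) + (c+c'))^2
    + 2 * (Real.pi : ℂ) * I * ((p : ℂ) + (c+c')) * ((x+y)/2)) with hFFdef
  set GG : ℤ → ℂ := fun d => Complex.exp ((Real.pi : ℂ) * I * (τ/2) * ((d : ℂ) + (c-c'))^2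
    + 2 * (Real.pi : ℂ) * I * ((d : ℂ) + (c-c')) * ((x-y)/2)) with hGGdef
  have hFF : Summable fun k : ℤ => ‖FF k‖ := summable_norm_J (τ/2) h2 (c+c') ((x+y)/2)
  have hGG : Summable fun k : ℤ => ‖GG k‖ := summable_norm_J (τ/2) h2 (c-c') ((x-y)/2)
  have step1 : J τ c x * J τ c' y = ∑' mn : ℤ × ℤ, FF (mn.1 + mn.2) * GG (mn.1 - mn.2) := by
    rw [J, J, tsum_mul_tsum_of_summable_norm (summable_norm_J τ hτ c x) (summable_norm_J τ hτ c' y)]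
    refine tsum_congr fun mn => ?_
    rw [hFFdef, hGGdef]
    simp only
    rw [← Complex.exp_add, ← Complex.exp_add]
    congr 1
    push_cast
    ring
  rw [step1, sum_split hFF hGG]
  have e1 : (∑' k : ℤ, FF k) = J (τ/2) (c+c') ((x+y)/2) := rfl
  have e2 : (∑' k : ℤ, GG k) = J (τ/2) (c-c') ((x-y)/2) := rfl
  have e3 : (∑' k : ℤ, (-1:ℂ)^k * FF k)
      = Complex.exp (-(Real.pi : ℂ) * I * (c+c')) * J (τ/2) (c+c') ((x+y)/2 + 1/2) :=
    alt_J (τ/2) (c+c') ((x+y)/2)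
  have e4 : (∑' k : ℤ, (-1:ℂ)^k * GG k)
      = Complex.exp (-(Real.pi : ℂ) * I * (c-c')) * J (τ/2) (c-c') ((x-y)/2 + 1/2) :=
    alt_J (τ/2) (c-c') ((x-y)/2)
  rw [e1, e2, e3, e4]
  rw [show (x+y)/2 + 1/2 = (x+y+1)/2 by ring, show (x-y)/2 + 1/2 = (x-y+1)/2 by ring]
  rw [show Complex.exp (-(Real.pi : ℂ) * I * (c+c')) * J (τ/2) (c+c') ((x+y+1)/2)
      * (Complex.exp (-(Real.pi : ℂ) * I * (c-c')) * J (τ/2) (c-c') ((x-y+1)/2))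
      = (Complex.exp (-(Real.pi : ℂ) * I * (c+c')) * Complex.exp (-(Real.pi : ℂ) * I * (c-c')))
        * (J (τ/2) (c+c') ((x+y+1)/2) * J (τ/2) (c-c') ((x-y+1)/2)) by ring]
  rw [← Complex.exp_add, show -(Real.pi : ℂ) * I * (c+c') + -(Real.pi : ℂ) * I * (c-c')
      = -2 * (Real.pi : ℂ) * I * c by ring]

lemma th1J (τ u : ℂ) : th1 τ u = -J τ (1/2) (u + 1/2) := by
  rw [th1, J, ← tsum_neg, ← tsum_mul_left]
  refine tsum_congr fun k => ?_
  rw [show ((-1:ℂ)^k) = Complex.exp ((k : ℂ) * ((Real.pi : ℂ) * I)) by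
    rw [Complex.exp_int_mul, Complex.exp_pi_mul_I]]
  rw [show (-I : ℂ) = -Complex.exp ((Real.pi : ℂ) * I / 2) by
    rw [show (Real.pi : ℂ) * I / 2 = ((Real.pi : ℝ)/2 : ℝ) * I by push_cast; ring,
      Complex.exp_mul_I]
    push_cast
    rw [Complex.cos_pi_div_two, Complex.sin_pi_div_two]
    ring]
  rw [show -Complex.exp ((Real.pi : ℂ) * I / 2) * (Complex.exp ((k : ℂ) * ((Real.pi : ℂ) * I)) *
      Complex.exp ((Real.pi : ℂ) * I * τ * ((k : ℂ) + 1/2)^2 + (Real.pi : ℂ) * I * (2*(k : ℂ) + 1) * u))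
      = -(Complex.exp ((Real.pi : ℂ) * I / 2) * Complex.exp ((k : ℂ) * ((Real.pi : ℂ) * I)) *
        Complex.exp ((Real.pi : ℂ) * I * τ * ((k : ℂ) + 1/2)^2 + (Real.pi : ℂ) * I * (2*(k : ℂ) + 1) * u)) by ring,
    ← Complex.exp_add, ← Complex.exp_add]
  congr 2
  ring

lemma th2J (τ u : ℂ) : th2 τ u = J τ (1/2) u := by
  rw [th2, th1J, show u + 1/2 + 1/2 = u + 1 by ring, J_shift1]
  rw [show 2 * (Real.pi : ℂ) * I * (1/2) = (Real.pi : ℂ) * I by ring, Complex.exp_pi_mul_I]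
  ring

lemma th3J (τ u : ℂ) : th3 τ u = J τ 0 u := by
  rw [th3, th1J, show u + (1+τ)/2 + 1/2 = (u + 1) + τ/2 by ring, J_tau_half,
    show (1:ℂ)/2 + 1/2 = 0 + 1 by norm_num, J_offset1, J_shift1]
  rw [show (2 : ℂ) * (Real.pi : ℂ) * I * 0 = 0 by ring, Complex.exp_zero, one_mul,
    show Complex.exp ((Real.pi : ℂ) * I * τ / 4 + (Real.pi : ℂ) * I * u) *
      -(Complex.exp (-((Real.pi : ℂ) * I * τ)/4 - (Real.pi : ℂ) * I * (u+1)) * J τ 0 u)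
      = -(Complex.exp ((Real.pi : ℂ) * I * τ / 4 + (Real.pi : ℂ) * I * u)
        * Complex.exp (-((Real.pi : ℂ) * I * τ)/4 - (Real.pi : ℂ) * I * (u+1))) * J τ 0 u by ring,
    ← Complex.exp_add,
    show (Real.pi : ℂ) * I * τ / 4 + (Real.pi : ℂ) * I * u
      + (-((Real.pi : ℂ) * I * τ)/4 - (Real.pi : ℂ) * I * (u+1)) = -((Real.pi : ℂ) * I) by ring]
  rw [show -((Real.pi : ℂ) * I) = 0 - (Real.pi : ℂ) * I by ring, Complex.exp_sub,
    Complex.exp_pi_mul_I, Complex.exp_zero]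
  ring

lemma exp_pi_half : Complex.exp ((Real.pi : ℂ) * I / 2) = I := by
  rw [show (Real.pi : ℂ) * I / 2 = ((Real.pi/2 : ℝ) : ℂ) * I by push_cast; ring,
    Complex.exp_mul_I]
  push_cast
  rw [Complex.cos_pi_div_two, Complex.sin_pi_div_two]
  ring

lemma th4J (τ u : ℂ) : th4 τ u = J τ 0 (u + 1/2) := by
  rw [th4, th1J, show u + τ/2 + 1/2 = (u + 1/2) + τ/2 by ring, J_tau_half,
    show (1:ℂ)/2 + 1/2 = 0 + 1 by norm_num, J_offset1]
  rw [show -I * Complex.exp ((Real.pi : ℂ) * I * τ / 4 + (Real.pi : ℂ) * I * u) *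
      -(Complex.exp (-((Real.pi : ℂ) * I * τ)/4 - (Real.pi : ℂ) * I * (u+1/2)) * J τ 0 (u+1/2))
      = (I * (Complex.exp ((Real.pi : ℂ) * I * τ / 4 + (Real.pi : ℂ) * I * u)
        * Complex.exp (-((Real.pi : ℂ) * I * τ)/4 - (Real.pi : ℂ) * I * (u+1/2)))) * J τ 0 (u+1/2) by ring,
    ← Complex.exp_add,
    show (Real.pi : ℂ) * I * τ / 4 + (Real.pi : ℂ) * I * u
      + (-((Real.pi : ℂ) * I * τ)/4 - (Real.pi : ℂ) * I * (u+1/2)) = -((Real.pi : ℂ) * I / 2) by ring,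
    Complex.exp_neg, exp_pi_half, Complex.inv_I]
  rw [show I * -I * J τ 0 (u + 1/2) = -(I*I) * J τ 0 (u + 1/2) by ring, Complex.I_mul_I]
  ring

lemma J_offset_half (τ u : ℂ) : J τ (-(1/2)) u = J τ (1/2) u := by
  have h := J_offset1 τ (-(1/2)) u
  rw [show (-(1/2) : ℂ) + 1 = 1/2 by ring] at h
  exact h.symm

lemma th1_odd (τ u : ℂ) : th1 τ (-u) = -th1 τ u := by
  rw [th1J, th1J]
  have h1 : J τ (1/2) (-u + 1/2) = J τ (1/2) (u - 1/2) := by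
    rw [show -u + 1/2 = -(u - 1/2) by ring, J_neg, J_offset_half]
  have hs := J_shift1 τ (1/2) (u - 1/2)
  rw [show u - 1/2 + 1 = u + 1/2 by ring,
    show 2 * (Real.pi : ℂ) * I * (1/2) = (Real.pi : ℂ) * I by ring,
    Complex.exp_pi_mul_I] at hs
  rw [h1]
  linear_combination -hs

/-- value J τ (1/2) (1/2) = 0 -/
lemma J_half_half (τ : ℂ) : J τ (1/2) (1/2) = 0 := by
  have h1 : J τ (1/2) (-(1/2)) = J τ (-(1/2)) (1/2) := J_neg τ (1/2) (1/2)
  have h2 : J τ (-(1/2)) (1/2) = J τ (1/2) (1/2) := J_offset_half τ (1/2)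
  have h3 := J_shift1 τ (1/2) (-(1/2))
  rw [show (-(1/2) : ℂ) + 1 = 1/2 by ring,
    show 2 * (Real.pi : ℂ) * I * (1/2) = (Real.pi : ℂ) * I by ring,
    Complex.exp_pi_mul_I] at h3
  have h4 : (2 : ℂ) * J τ (1/2) (1/2) = 0 := by linear_combination h3 - h1 - h2
  exact (mul_eq_zero.mp h4).resolve_left two_ne_zero

lemma exp_neg_pi : Complex.exp (-2 * (Real.pi : ℂ) * I * (1/2)) = -1 := by
  rw [show (-2 : ℂ) * (Real.pi : ℂ) * I * (1/2) = -((Real.pi : ℂ) * I) by ring,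
    Complex.exp_neg, Complex.exp_pi_mul_I]
  norm_num

lemma exp_zero' : Complex.exp (-2 * (Real.pi : ℂ) * I * 0) = 1 := by
  rw [show (-2 : ℂ) * (Real.pi : ℂ) * I * 0 = 0 by ring, Complex.exp_zero]

lemma p21 (τ : ℂ) (hτ : 0 < τ.im) (x y : ℂ) :
    th2 τ x * th1 τ y
      = -(1/2) * (J (τ/2) 1 ((x+y+1/2)/2) * J (τ/2) 0 ((x-y-1/2)/2)
          - J (τ/2) 1 ((x+y+3/2)/2) * J (τ/2) 0 ((x-y+1/2)/2)) := by
  rw [th2J, th1J]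
  have h := FL τ hτ (1/2) (1/2) x (y+1/2)
  rw [show (1:ℂ)/2+1/2 = 1 by norm_num, show (1:ℂ)/2-1/2 = 0 by norm_num,
    show (x+(y+1/2))/2 = (x+y+1/2)/2 by ring,
    show (x-(y+1/2))/2 = (x-y-1/2)/2 by ring,
    show (x+(y+1/2)+1)/2 = (x+y+3/2)/2 by ring,
    show (x-(y+1/2)+1)/2 = (x-y+1/2)/2 by ring,
    exp_neg_pi] at h
  linear_combination -h

lemma p34 (τ : ℂ) (hτ : 0 < τ.im) (x y : ℂ) :
    th3 τ x * th4 τ y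
      = (1/2) * (J (τ/2) 0 ((x+y+1/2)/2) * J (τ/2) 0 ((x-y-1/2)/2)
          + J (τ/2) 0 ((x+y+3/2)/2) * J (τ/2) 0 ((x-y+1/2)/2)) := by
  rw [th3J, th4J]
  have h := FL τ hτ 0 0 x (y+1/2)
  rw [show (0:ℂ)+0 = 0 by norm_num, show (0:ℂ)-0 = 0 by norm_num,
    show (x+(y+1/2))/2 = (x+y+1/2)/2 by ring,
    show (x-(y+1/2))/2 = (x-y-1/2)/2 by ring,
    show (x+(y+1/2)+1)/2 = (x+y+3/2)/2 by ring,
    show (x-(y+1/2)+1)/2 = (x-y+1/2)/2 by ring,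
    exp_zero'] at h
  linear_combination h

lemma p31 (τ : ℂ) (hτ : 0 < τ.im) (x y : ℂ) :
    th3 τ x * th1 τ y
      = -(1/2) * (J (τ/2) (1/2) ((x+y+1/2)/2) * J (τ/2) (1/2) ((x-y-1/2)/2)
          + J (τ/2) (1/2) ((x+y+3/2)/2) * J (τ/2) (1/2) ((x-y+1/2)/2)) := by
  rw [th3J, th1J]
  have h := FL τ hτ 0 (1/2) x (y+1/2)
  rw [show (0:ℂ)+1/2 = 1/2 by norm_num, show (0:ℂ)-1/2 = -(1/2) by norm_num,
    show (x+(y+1/2))/2 = (x+y+1/2)/2 by ring,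
    show (x-(y+1/2))/2 = (x-y-1/2)/2 by ring,
    show (x+(y+1/2)+1)/2 = (x+y+3/2)/2 by ring,
    show (x-(y+1/2)+1)/2 = (x-y+1/2)/2 by ring,
    exp_zero', J_offset_half, J_offset_half] at h
  linear_combination -h

lemma p24 (τ : ℂ) (hτ : 0 < τ.im) (x y : ℂ) :
    th2 τ x * th4 τ y
      = (1/2) * (J (τ/2) (1/2) ((x+y+1/2)/2) * J (τ/2) (1/2) ((x-y-1/2)/2)
          - J (τ/2) (1/2) ((x+y+3/2)/2) * J (τ/2) (1/2) ((x-y+1/2)/2)) := by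
  rw [th2J, th4J]
  have h := FL τ hτ (1/2) 0 x (y+1/2)
  rw [show (1:ℂ)/2+0 = 1/2 by norm_num, show (1:ℂ)/2-0 = 1/2 by norm_num,
    show (x+(y+1/2))/2 = (x+y+1/2)/2 by ring,
    show (x-(y+1/2))/2 = (x-y-1/2)/2 by ring,
    show (x+(y+1/2)+1)/2 = (x+y+3/2)/2 by ring,
    show (x-(y+1/2)+1)/2 = (x-y+1/2)/2 by ring,
    exp_neg_pi] at h
  linear_combination h

lemma p41 (τ : ℂ) (hτ : 0 < τ.im) (x y : ℂ) :
    th4 τ x * th1 τ y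
      = -(1/2) * (J (τ/2) (1/2) ((x+y+1)/2) * J (τ/2) (1/2) ((x-y)/2)
          + J (τ/2) (1/2) ((x+y+2)/2) * J (τ/2) (1/2) ((x-y+1)/2)) := by
  rw [th4J, th1J]
  have h := FL τ hτ 0 (1/2) (x+1/2) (y+1/2)
  rw [show (0:ℂ)+1/2 = 1/2 by norm_num, show (0:ℂ)-1/2 = -(1/2) by norm_num,
    show (x+1/2+(y+1/2))/2 = (x+y+1)/2 by ring,
    show (x+1/2-(y+1/2))/2 = (x-y)/2 by ring,
    show (x+1/2+(y+1/2)+1)/2 = (x+y+2)/2 by ring,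
    show (x+1/2-(y+1/2)+1)/2 = (x-y+1)/2 by ring,
    exp_zero', J_offset_half, J_offset_half] at h
  linear_combination -h

lemma p23 (τ : ℂ) (hτ : 0 < τ.im) (x y : ℂ) :
    th2 τ x * th3 τ y
      = (1/2) * (J (τ/2) (1/2) ((x+y)/2) * J (τ/2) (1/2) ((x-y)/2)
          - J (τ/2) (1/2) ((x+y+1)/2) * J (τ/2) (1/2) ((x-y+1)/2)) := by
  rw [th2J, th3J]
  have h := FL τ hτ (1/2) 0 x y
  rw [show (1:ℂ)/2+0 = 1/2 by norm_num, show (1:ℂ)/2-0 = 1/2 by norm_num,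
    exp_neg_pi] at h
  linear_combination h

/-- Addition formula, case α = 2. -/
lemma AF1 (τ : ℂ) (hτ : 0 < τ.im) (z w : ℂ) :
    (th2 τ (z-w) * th1 τ (z+w) + th2 τ (z+w) * th1 τ (z-w)) * (th3 τ 0 * th4 τ 0)
      = 2 * (th2 τ z * th1 τ z) * (th3 τ w * th4 τ w) := by
  rw [p21 τ hτ (z-w) (z+w), p21 τ hτ (z+w) (z-w), p21 τ hτ z z,
    p34 τ hτ 0 0, p34 τ hτ w w]
  rw [show (z-w+(z+w)+1/2)/2 = z+1/4 by ring, show (z-w-(z+w)-1/2)/2 = -(w+1/4) by ring,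
    show (z-w+(z+w)+3/2)/2 = z+3/4 by ring, show (z-w-(z+w)+1/2)/2 = -(w-1/4) by ring,
    show (z+w+(z-w)+1/2)/2 = z+1/4 by ring, show (z+w-(z-w)-1/2)/2 = w-1/4 by ring,
    show (z+w+(z-w)+3/2)/2 = z+3/4 by ring, show (z+w-(z-w)+1/2)/2 = w+1/4 by ring,
    show (z+z+1/2)/2 = z+1/4 by ring, show (z-z-1/2)/2 = -((1:ℂ)/4) by ring,
    show (z+z+3/2)/2 = z+3/4 by ring, show (z-z+1/2)/2 = (1:ℂ)/4 by ring,
    show ((0:ℂ)+0+1/2)/2 = (1:ℂ)/4 by ring, show ((0:ℂ)-0-1/2)/2 = -((1:ℂ)/4) by ring,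
    show ((0:ℂ)+0+3/2)/2 = (3:ℂ)/4 by ring, show ((0:ℂ)-0+1/2)/2 = (1:ℂ)/4 by ring,
    show (w+w+1/2)/2 = w+1/4 by ring, show (w-w-1/2)/2 = -((1:ℂ)/4) by ring,
    show (w+w+3/2)/2 = w+3/4 by ring, show (w-w+1/2)/2 = (1:ℂ)/4 by ring]
  have r1 : J (τ/2) 0 (-(w+1/4)) = J (τ/2) 0 (w+1/4) := by rw [J_neg, neg_zero]
  have r2 : J (τ/2) 0 (-(w-1/4)) = J (τ/2) 0 (w-1/4) := by rw [J_neg, neg_zero]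
  have r3 : J (τ/2) 0 (-((1:ℂ)/4)) = J (τ/2) 0 ((1:ℂ)/4) := by rw [J_neg, neg_zero]
  have r4 : J (τ/2) 0 ((3:ℂ)/4) = J (τ/2) 0 ((1:ℂ)/4) := by
    rw [show (3:ℂ)/4 = -((1:ℂ)/4) + 1 by ring, J_shift1,
      show (2:ℂ)*(Real.pi:ℂ)*I*0 = 0 by ring, Complex.exp_zero, one_mul, r3]
  have r5 : J (τ/2) 0 (w+3/4) = J (τ/2) 0 (w-1/4) := by
    rw [show w+3/4 = (w-1/4) + 1 by ring, J_shift1,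
      show (2:ℂ)*(Real.pi:ℂ)*I*0 = 0 by ring, Complex.exp_zero, one_mul]
  rw [r1, r2, r3, r4, r5]
  ring

lemma Jh_neg (τ v : ℂ) : J (τ/2) (1/2) (-v) = J (τ/2) (1/2) v := by
  rw [J_neg, J_offset_half]

lemma Jh_shift (τ v : ℂ) : J (τ/2) (1/2) (v + 1) = -J (τ/2) (1/2) v := by
  rw [J_shift1, show (2:ℂ)*(Real.pi:ℂ)*I*(1/2) = (Real.pi:ℂ)*I by ring, Complex.exp_pi_mul_I]
  ring

/-- Addition formula, case α = 3. -/
lemma AF2 (τ : ℂ) (hτ : 0 < τ.im) (z w : ℂ) :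
    (th3 τ (z-w) * th1 τ (z+w) + th3 τ (z+w) * th1 τ (z-w)) * (th2 τ 0 * th4 τ 0)
      = 2 * (th3 τ z * th1 τ z) * (th2 τ w * th4 τ w) := by
  rw [p31 τ hτ (z-w) (z+w), p31 τ hτ (z+w) (z-w), p31 τ hτ z z,
    p24 τ hτ 0 0, p24 τ hτ w w]
  rw [show (z-w+(z+w)+1/2)/2 = z+1/4 by ring, show (z-w-(z+w)-1/2)/2 = -(w+1/4) by ring,
    show (z-w+(z+w)+3/2)/2 = z+3/4 by ring, show (z-w-(z+w)+1/2)/2 = -(w-1/4) by ring,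
    show (z+w+(z-w)+1/2)/2 = z+1/4 by ring, show (z+w-(z-w)-1/2)/2 = w-1/4 by ring,
    show (z+w+(z-w)+3/2)/2 = z+3/4 by ring, show (z+w-(z-w)+1/2)/2 = w+1/4 by ring,
    show (z+z+1/2)/2 = z+1/4 by ring, show (z-z-1/2)/2 = -((1:ℂ)/4) by ring,
    show (z+z+3/2)/2 = z+3/4 by ring, show (z-z+1/2)/2 = (1:ℂ)/4 by ring,
    show ((0:ℂ)+0+1/2)/2 = (1:ℂ)/4 by ring, show ((0:ℂ)-0-1/2)/2 = -((1:ℂ)/4) by ring,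
    show ((0:ℂ)+0+3/2)/2 = (3:ℂ)/4 by ring, show ((0:ℂ)-0+1/2)/2 = (1:ℂ)/4 by ring,
    show (w+w+1/2)/2 = w+1/4 by ring, show (w-w-1/2)/2 = -((1:ℂ)/4) by ring,
    show (w+w+3/2)/2 = w+3/4 by ring, show (w-w+1/2)/2 = (1:ℂ)/4 by ring]
  have r1 := Jh_neg τ (w+1/4)
  have r2 := Jh_neg τ (w-1/4)
  have r3 := Jh_neg τ ((1:ℂ)/4)
  have r4 : J (τ/2) (1/2) ((3:ℂ)/4) = -J (τ/2) (1/2) ((1:ℂ)/4) := by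
    rw [show (3:ℂ)/4 = -((1:ℂ)/4) + 1 by ring, Jh_shift, r3]
  have r5 : J (τ/2) (1/2) (w+3/4) = -J (τ/2) (1/2) (w-1/4) := by
    rw [show w+3/4 = (w-1/4) + 1 by ring, Jh_shift]
  rw [r1, r2, r3, r4, r5]
  ring

/-- Addition formula, case α = 4. -/
lemma AF3 (τ : ℂ) (hτ : 0 < τ.im) (z w : ℂ) :
    (th4 τ (z-w) * th1 τ (z+w) + th4 τ (z+w) * th1 τ (z-w)) * (th2 τ 0 * th3 τ 0)
      = 2 * (th4 τ z * th1 τ z) * (th2 τ w * th3 τ w) := by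
  rw [p41 τ hτ (z-w) (z+w), p41 τ hτ (z+w) (z-w), p41 τ hτ z z,
    p23 τ hτ 0 0, p23 τ hτ w w]
  rw [show (z-w+(z+w)+1)/2 = z+1/2 by ring, show (z-w-(z+w))/2 = -w by ring,
    show (z-w+(z+w)+2)/2 = z+1 by ring, show (z-w-(z+w)+1)/2 = -(w-1/2) by ring,
    show (z+w+(z-w)+1)/2 = z+1/2 by ring, show (z+w-(z-w))/2 = w by ring,
    show (z+w+(z-w)+2)/2 = z+1 by ring, show (z+w-(z-w)+1)/2 = w+1/2 by ring,
    show (z+z+1)/2 = z+1/2 by ring, show (z-z)/2 = (0:ℂ) by ring,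
    show (z+z+2)/2 = z+1 by ring, show (z-z+1)/2 = (1:ℂ)/2 by ring,
    show ((0:ℂ)+0)/2 = (0:ℂ) by ring, show ((0:ℂ)-0)/2 = (0:ℂ) by ring,
    show ((0:ℂ)+0+1)/2 = (1:ℂ)/2 by ring, show ((0:ℂ)-0+1)/2 = (1:ℂ)/2 by ring,
    show (w+w)/2 = w by ring, show (w-w)/2 = (0:ℂ) by ring,
    show (w+w+1)/2 = w+1/2 by ring, show (w-w+1)/2 = (1:ℂ)/2 by ring]
  have r1 := Jh_neg τ w
  have r2 : J (τ/2) (1/2) (-(w-1/2)) = -J (τ/2) (1/2) (w+1/2) := by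
    rw [Jh_neg]
    have hs := Jh_shift τ (w-1/2)
    rw [show w-1/2+1 = w+1/2 by ring] at hs
    linear_combination hs
  rw [r1, r2, Jh_shift τ z, J_half_half]
  ring

lemma th_zero (τ : ℂ) : th τ 0 = th1 τ := rfl
lemma th_one (τ : ℂ) : th τ 1 = th2 τ := rfl
lemma th_two (τ : ℂ) : th τ 2 = th3 τ := rfl
lemma th_three (τ : ℂ) : th τ 3 = th4 τ := rfl

theorem statement7 (τ : ℂ) (hτ : 0 < τ.im) (z q : ℂ) (a b c : Fin 4)
    (ha : a ≠ 0) (hb : b ≠ 0) (hc : c ≠ 0)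
    (hab : a ≠ b) (hac : a ≠ c) (hbc : b ≠ c)
    (h1 : th1 τ (2*q) ≠ 0)
    (h2 : th1 τ (-(2*q)) ≠ 0)
    (h3 : th1 τ z ≠ 0)
    (h4 : th τ b 0 ≠ 0)
    (h5 : th τ c 0 ≠ 0) :
    th τ a (z - 2*q) * psi τ 0 (2*q) z - th τ a (z + 2*q) * psi τ 0 (-(2*q)) z
      = 2 * th1d τ 0 * th τ a z * th τ b (2*q) * th τ c (2*q)
        / (th τ b 0 * th τ c 0 * th1 τ (2*q)) := by

  rw [psi, psi, th_zero, th1_odd τ (2*q),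
    show -(2*q) + z = z - 2*q by ring, show 2*q + z = z + 2*q by ring]
  fin_cases a <;> fin_cases b <;> fin_cases c <;>
    first
      | exact absurd rfl ha
      | exact absurd rfl hb
      | exact absurd rfl hc
      | exact absurd rfl hab
      | exact absurd rfl hac
      | exact absurd rfl hbc
      | (simp only [show (⟨1, by norm_num⟩ : Fin 4) = 1 from rfl,
           show (⟨2, by norm_num⟩ : Fin 4) = 2 from rfl,
           show (⟨3, by norm_num⟩ : Fin 4) = 3 from rfl,
           th_one, th_two, th_three] at h4 h5 ⊢
         field_simp
         first
          | linear_combination (th1d τ 0) * AF1 τ hτ z (2*q)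
          | linear_combination (th1d τ 0) * AF2 τ hτ z (2*q)
          | linear_combination (th1d τ 0) * AF3 τ hτ z (2*q))

end RvD
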